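/- Let V be a finite type of cardinality k, and let h : Finset V → ℝ satisfy h(∅) = 0. Then for every W ⊆ V, h(W) = ∑_{S} I_h(S), where the sum ranges over all nonempty S ⊆ V with S ∩ W ≠ ∅. -/

import Mathlib

/-- The signed atom measure `I_h(S) := ∑_{T ⊆ S} (−1)^{|T|+1} h(T ∪ (V \ S))`. -/
def signedAtomMeasure {V : Type} [Fintype V] [DecidableEq V]
    (h : Finset V → ℝ) (S : Finset V) : ℝ :=
  ∑ T ∈ S.powerset, (-1 : ℝ) ^ (T.card + 1) * h (T ∪ Sᶜ)

lemma neg_one_pow_congr_aux (m n : ℕ) (hmn : m % 2 = n % 2) : (-1 : ℝ) ^ m = (-1) ^ n := by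
  rw [← Nat.div_add_mod m 2, ← Nat.div_add_mod n 2, hmn, pow_add, pow_add, pow_mul, pow_mul]
  norm_num

open Finset in
lemma signedAtomMeasure_eq {V : Type} [Fintype V] [DecidableEq V]
    (h : Finset V → ℝ) (S : Finset V) :
    signedAtomMeasure h S = ∑ R ∈ S.powerset, (-1 : ℝ) ^ (S.card + R.card + 1) * h Rᶜ := by
  unfold signedAtomMeasure
  refine sum_nbij' (fun T => S \ T) (fun R => S \ R) ?_ ?_ ?_ ?_ ?_
  · intro T hT; simp only [mem_powerset] at *; exact sdiff_subset
  · intro R hR; simp only [mem_powerset] at *; exact sdiff_subset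
  · intro T hT; simp only [mem_powerset] at hT; exact Finset.sdiff_sdiff_eq_self hT
  · intro R hR; simp only [mem_powerset] at hR; exact Finset.sdiff_sdiff_eq_self hR
  · intro T hT
    simp only [mem_powerset] at hT
    have h1 : T ∪ Sᶜ = (S \ T)ᶜ := by
      ext x
      simp only [mem_union, mem_compl, mem_sdiff]
      tauto
    have h2 : (S \ T).card = S.card - T.card := card_sdiff_of_subset hT
    have h3 : T.card ≤ S.card := card_le_card hT
    rw [h1, h2]
    congr 1
    apply neg_one_pow_congr_aux
    omega

open Finset in
lemma alt_sum_filter {V : Type} [Fintype V] [DecidableEq V] (X R : Finset V) (hR : R ⊆ X) :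
    ∑ S ∈ X.powerset.filter (fun S => R ⊆ S), (-1 : ℝ) ^ S.card
      = (-1 : ℝ) ^ R.card * (if X \ R = ∅ then 1 else 0) := by
  have key : ∑ S ∈ X.powerset.filter (fun S => R ⊆ S), (-1 : ℝ) ^ S.card
      = ∑ B ∈ (X \ R).powerset, (-1 : ℝ) ^ (R.card + B.card) := by
    refine sum_nbij' (fun S => S \ R) (fun B => R ∪ B) ?_ ?_ ?_ ?_ ?_
    · intro S hS; simp only [mem_filter, mem_powerset] at *
      exact sdiff_subset_sdiff hS.1 le_rfl
    · intro B hB; simp only [mem_filter, mem_powerset] at *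
      exact ⟨union_subset hR (hB.trans sdiff_subset), subset_union_left⟩
    · intro S hS; simp only [mem_filter, mem_powerset] at hS
      exact union_sdiff_of_subset hS.2
    · intro B hB; simp only [mem_powerset] at hB
      exact union_sdiff_cancel_left (disjoint_sdiff.mono_right hB)
    · intro S hS; simp only [mem_filter, mem_powerset] at hS
      apply neg_one_pow_congr_aux
      have h2 : ((fun S => S \ R) S).card = S.card - R.card := card_sdiff_of_subset hS.2
      have h3 := card_le_card hS.2
      beta_reduce at h2
      omega
  rw [key]
  simp only [pow_add, ← mul_sum]
  congr 1
  have hz := @Finset.sum_powerset_neg_one_pow_card V _ (X \ R)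
  have cast : ∑ m ∈ (X \ R).powerset, (-1 : ℝ) ^ m.card
      = ((∑ m ∈ (X \ R).powerset, (-1 : ℤ) ^ m.card : ℤ) : ℝ) := by push_cast; rfl
  rw [cast, hz]
  split <;> simp

open Finset in
lemma sum_signedAtomMeasure_powerset {V : Type} [Fintype V] [DecidableEq V]
    (h : Finset V → ℝ) (X : Finset V) :
    ∑ S ∈ X.powerset, signedAtomMeasure h S = - h Xᶜ := by
  have step1 : ∑ S ∈ X.powerset, signedAtomMeasure h S
      = ∑ S ∈ X.powerset, ∑ R ∈ X.powerset,
          if R ⊆ S then (-1 : ℝ) ^ (S.card + R.card + 1) * h Rᶜ else 0 := by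
    refine sum_congr rfl fun S hS => ?_
    rw [signedAtomMeasure_eq]
    rw [mem_powerset] at hS
    have hp : S.powerset = X.powerset.filter (fun R => R ⊆ S) := by
      ext R; simp only [mem_powerset, mem_filter]
      exact ⟨fun hr => ⟨hr.trans hS, hr⟩, fun hr => hr.2⟩
    rw [hp, sum_filter]
  rw [step1, Finset.sum_comm]
  have step2 : ∀ R ∈ X.powerset,
      (∑ S ∈ X.powerset, if R ⊆ S then (-1 : ℝ) ^ (S.card + R.card + 1) * h Rᶜ else 0)
      = (if X \ R = ∅ then 1 else 0) * (- h Rᶜ) := by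
    intro R hR
    rw [mem_powerset] at hR
    rw [← sum_filter]
    have heq : ∀ S ∈ X.powerset.filter (fun S => R ⊆ S),
        (-1 : ℝ) ^ (S.card + R.card + 1) * h Rᶜ
          = (-1 : ℝ) ^ S.card * ((-1 : ℝ) ^ (R.card + 1) * h Rᶜ) := by
      intro S _; rw [pow_add, pow_add]; ring
    rw [sum_congr rfl heq, ← sum_mul, alt_sum_filter X R hR]
    split_ifs
    · rw [pow_succ]
      ring_nf
      have hpow : (-1 : ℝ) ^ (R.card * 2) = 1 := by
        rw [neg_one_pow_congr_aux (R.card * 2) 0 (by omega), pow_zero]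
      rw [hpow, mul_one]
    · ring
  rw [sum_congr rfl step2]
  rw [Finset.sum_eq_single X]
  · simp
  · intro b hb hbX
    rw [mem_powerset] at hb
    rw [if_neg, zero_mul]
    intro hcon
    exact hbX (le_antisymm hb (sdiff_eq_empty_iff_subset.mp hcon))
  · intro hX
    exact absurd (mem_powerset_self X) hX

/-- Let `V` be a finite type of cardinality `k` and `h : Finset V → ℝ` with
`h(∅) = 0`.  Then for every `W ⊆ V`, `h(W) = ∑_S I_h(S)`, the sum over all nonempty `S ⊆ V`
with `S ∩ W ≠ ∅`. -/
theorem entropy_eq_sum_of_atoms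
    {V : Type} [Fintype V] [DecidableEq V] {k : ℕ} (hk : Fintype.card V = k)
    (h : Finset V → ℝ) (h0 : h ∅ = 0) (W : Finset V) :
    h W = ∑ S ∈ Finset.univ.powerset.filter
        (fun S => S.Nonempty ∧ (S ∩ W).Nonempty), signedAtomMeasure h S := by
  classical
  by_cases hW : W = ∅
  · subst hW
    simp [h0]
  · have hfilter : (Finset.univ.powerset.filter
        (fun S : Finset V => S.Nonempty ∧ (S ∩ W).Nonempty))
        = Finset.univ.powerset.filter (fun S => ¬ S ⊆ Wᶜ) := by
      ext S
      simp only [Finset.mem_filter, Finset.mem_powerset, Finset.subset_univ, true_and]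
      constructor
      · rintro ⟨-, hSW⟩ hsub
        obtain ⟨x, hx⟩ := hSW
        rw [Finset.mem_inter] at hx
        have := hsub hx.1
        rw [Finset.mem_compl] at this
        exact this hx.2
      · intro hsub
        rw [Finset.not_subset] at hsub
        obtain ⟨x, hxS, hxW⟩ := hsub
        rw [Finset.mem_compl, not_not] at hxW
        exact ⟨⟨x, hxS⟩, ⟨x, Finset.mem_inter.mpr ⟨hxS, hxW⟩⟩⟩
    have hsplit := Finset.sum_filter_add_sum_filter_not
      (Finset.univ.powerset : Finset (Finset V)) (fun S => S ⊆ Wᶜ) (signedAtomMeasure h)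
    have hsub : (Finset.univ.powerset.filter (fun S : Finset V => S ⊆ Wᶜ)) = Wᶜ.powerset := by
      ext S
      simp [Finset.mem_filter, Finset.mem_powerset]
    have htot : ∑ S ∈ (Finset.univ.powerset : Finset (Finset V)), signedAtomMeasure h S = 0 := by
      rw [sum_signedAtomMeasure_powerset, Finset.compl_univ, h0, neg_zero]
    have hWc : ∑ S ∈ (Wᶜ).powerset, signedAtomMeasure h S = - h W := by
      rw [sum_signedAtomMeasure_powerset, compl_compl]
    rw [hfilter]
    rw [hsub, hWc] at hsplit
    linarith
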